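/- Let H be a frame, regarded as a commutative unital quantale with multiplication * = ⊓ and unit u = ⊤, and let λ be a ◊₁-cone with vertex H. Then λ is compatible if and only if every λ_C is an ℓ-function, i.e. for every object C of 𝒞: (ed) ⨆ y : F'(C), λ_C(a, y) = ⊤ for all a ∈ F(C), and (uv) λ_C(a, y₁) ⊓ λ_C(a, y₂) ≤ (y₁ = y₂) • ⊤ for all a ∈ F(C), y₁, y₂ ∈ F'(C). -/

import Mathlib

open CategoryTheory CategoryTheory.Limits

universe v u w

lemma aux_inj {C : Type u} [Category.{v} C] {X Y : C} [HasBinaryProduct X Y]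
    (F' : C ⥤ Type w) [PreservesLimit (pair X Y) F'] {w z : F'.obj (X ⨯ Y)}
    (h1 : F'.map Limits.prod.fst w = F'.map Limits.prod.fst z)
    (h2 : F'.map Limits.prod.snd w = F'.map Limits.prod.snd z) : w = z := by
  have hbij : Function.Injective (prodComparison F' X Y) :=
    ((isIso_iff_bijective _).mp inferInstance).injective
  have hbij2 : Function.Injective (Types.binaryProductIso (F'.obj X) (F'.obj Y)).hom :=
    ((isIso_iff_bijective _).mp inferInstance).injective
  apply hbij; apply hbij2
  have f1 := types_congr_hom (Types.binaryProductIso_hom_comp_fst (F'.obj X) (F'.obj Y))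
  have f2 := types_congr_hom (Types.binaryProductIso_hom_comp_snd (F'.obj X) (F'.obj Y))
  have g1 := types_congr_hom (prodComparison_fst F' X Y)
  have g2 := types_congr_hom (prodComparison_snd F' X Y)
  simp only [types_comp_apply] at f1 f2 g1 g2
  have f1' : ∀ x, ((Types.binaryProductIso (F'.obj X) (F'.obj Y)).hom x).1 =
      (Limits.prod.fst : F'.obj X ⨯ F'.obj Y ⟶ F'.obj X) x := f1
  have f2' : ∀ x, ((Types.binaryProductIso (F'.obj X) (F'.obj Y)).hom x).2 =
      (Limits.prod.snd : F'.obj X ⨯ F'.obj Y ⟶ F'.obj Y) x := f2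
  ext
  · rw [f1', f1', g1, g1, h1]
  · rw [f2', f2', g2, g2, h2]

lemma aux_surj {C : Type u} [Category.{v} C] {X Y : C} [HasBinaryProduct X Y]
    (F' : C ⥤ Type w) [PreservesLimit (pair X Y) F'] (y₁ : F'.obj X) (y₂ : F'.obj Y) :
    ∃ z' : F'.obj (X ⨯ Y),
      F'.map Limits.prod.fst z' = y₁ ∧ F'.map Limits.prod.snd z' = y₂ := by
  refine ⟨inv (prodComparison F' X Y) ((Types.binaryProductIso (F'.obj X) (F'.obj Y)).inv (y₁, y₂)), ?_, ?_⟩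
  · have g1 := types_congr_hom (prodComparison_fst F' X Y)
    have f1 := types_congr_hom (Types.binaryProductIso_inv_comp_fst (F'.obj X) (F'.obj Y)) (y₁, y₂)
    have hinv := types_congr_hom (IsIso.inv_hom_id (prodComparison F' X Y))
      ((Types.binaryProductIso (F'.obj X) (F'.obj Y)).inv (y₁, y₂))
    simp only [types_comp_apply, types_id_apply] at g1 f1 hinv
    rw [← g1, hinv, f1]
    rfl
  · have g2 := types_congr_hom (prodComparison_snd F' X Y)
    have f2 := types_congr_hom (Types.binaryProductIso_inv_comp_snd (F'.obj X) (F'.obj Y)) (y₁, y₂)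
    have hinv := types_congr_hom (IsIso.inv_hom_id (prodComparison F' X Y))
      ((Types.binaryProductIso (F'.obj X) (F'.obj Y)).inv (y₁, y₂))
    simp only [types_comp_apply, types_id_apply] at g2 f2 hinv
    rw [← g2, hinv, f2]
    rfl

lemma aux_term {C : Type u} [Category.{v} C] [HasTerminal C]
    (F' : C ⥤ Type w) [PreservesLimit (Functor.empty.{0} C) F'] :
    Nonempty (F'.obj (⊤_ C)) ∧ Subsingleton (F'.obj (⊤_ C)) := by
  have e : F'.obj (⊤_ C) ≃ PUnit :=
    ((PreservesTerminal.iso F') ≪≫ Types.terminalIso).toEquiv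
  exact ⟨⟨e.symm ⟨⟩⟩, e.subsingleton⟩

/-- Let `H` be a frame (regarded as a commutative unital quantale with `* = ⊓`
and `u = ⊤`) and `λ` a `◊₁`-cone with vertex `H`.  Then `λ` is compatible if
and only if every `λ_C` is an ℓ-function, i.e. (ed) `⨆ y, λ_C(a, y) = ⊤` and
(uv) `λ_C(a, y₁) ⊓ λ_C(a, y₂) ≤ (y₁ = y₂) • ⊤`. -/
theorem compatible_iff_cone_of_lFunctions
    {H : Type w} [Order.Frame H]
    {C : Type u} [Category.{v} C] [HasTerminal C] [HasBinaryProducts C]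
    (F F' : C ⥤ Type w)
    [PreservesFiniteProducts F] [PreservesFiniteProducts F']
    (lam : ∀ X : C, F.obj X → F'.obj X → H)
    -- ◊₁-cone
    (hdiam₁ : ∀ {X Y : C} (f : X ⟶ Y) (a : F.obj X) (b' : F'.obj Y),
      lam Y (F.map f a) b' = ⨆ y : F'.obj X, ⨆ (_ : F'.map f y = b'), lam X a y) :
    -- compatibility (with * = ⊓, u = ⊤)
    ((∀ (X Y : C) (z : F.obj (X ⨯ Y)) (z' : F'.obj (X ⨯ Y)),
        lam (X ⨯ Y) z z' =
          lam X (F.map Limits.prod.fst z) (F'.map Limits.prod.fst z') ⊓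
            lam Y (F.map Limits.prod.snd z) (F'.map Limits.prod.snd z')) ∧
      (∀ (z : F.obj (⊤_ C)) (z' : F'.obj (⊤_ C)), lam (⊤_ C) z z' = ⊤))
    ↔
    -- every λ_C is an ℓ-function
    (∀ X : C,
      (∀ a : F.obj X, (⨆ y : F'.obj X, lam X a y) = ⊤) ∧
      (∀ (a : F.obj X) (y₁ y₂ : F'.obj X),
        lam X a y₁ ⊓ lam X a y₂ ≤ ⨆ (_ : y₁ = y₂), (⊤ : H))) := by
  obtain ⟨⟨b₀⟩, hsub⟩ := aux_term F'
  constructor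
  · rintro ⟨hC1, hC2⟩ X
    constructor
    · -- (ed)
      intro a
      have h := hdiam₁ (terminal.from X) a b₀
      rw [hC2] at h
      have : ∀ y : F'.obj X, (⨆ (_ : F'.map (terminal.from X) y = b₀), lam X a y)
          = lam X a y := by
        intro y
        exact iSup_pos (hsub.elim _ _)
      rw [iSup_congr this] at h
      exact h.symm
    · -- (uv)
      intro a y₁ y₂
      obtain ⟨z', hz1, hz2⟩ := aux_surj F' y₁ y₂
      set δ : X ⟶ X ⨯ X := Limits.prod.lift (𝟙 X) (𝟙 X) with hδ
      have hfa : F.map Limits.prod.fst (F.map δ a) = a := by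
        rw [← FunctorToTypes.map_comp_apply, hδ, Limits.prod.lift_fst,
          FunctorToTypes.map_id_apply]
      have hsa : F.map Limits.prod.snd (F.map δ a) = a := by
        rw [← FunctorToTypes.map_comp_apply, hδ, Limits.prod.lift_snd,
          FunctorToTypes.map_id_apply]
      have key : lam X a y₁ ⊓ lam X a y₂ = lam (X ⨯ X) (F.map δ a) z' := by
        rw [hC1 X X (F.map δ a) z', hfa, hsa, hz1, hz2]
      rw [key, hdiam₁ δ (a := a) z']
      refine iSup_le fun y => iSup_le fun hy => ?_
      have e1 : y₁ = y := by
        rw [← hz1, ← hy, ← FunctorToTypes.map_comp_apply, hδ, Limits.prod.lift_fst,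
          FunctorToTypes.map_id_apply]
      have e2 : y₂ = y := by
        rw [← hz2, ← hy, ← FunctorToTypes.map_comp_apply, hδ, Limits.prod.lift_snd,
          FunctorToTypes.map_id_apply]
      have : y₁ = y₂ := e1.trans e2.symm
      exact le_iSup_of_le this le_top
  · intro hl
    constructor
    · -- (C1)
      intro X Y z z'
      apply le_antisymm
      · apply le_inf
        · rw [hdiam₁ Limits.prod.fst z (F'.map Limits.prod.fst z')]
          exact le_iSup_of_le z' (le_iSup_of_le rfl le_rfl)
        · rw [hdiam₁ Limits.prod.snd z (F'.map Limits.prod.snd z')]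
          exact le_iSup_of_le z' (le_iSup_of_le rfl le_rfl)
      · rw [hdiam₁ Limits.prod.fst z (F'.map Limits.prod.fst z'),
          hdiam₁ Limits.prod.snd z (F'.map Limits.prod.snd z'),
          iSup_inf_eq]
        refine iSup_le fun w => ?_
        rw [iSup_inf_eq]
        refine iSup_le fun hw => ?_
        rw [inf_iSup_eq]
        refine iSup_le fun v => ?_
        rw [inf_iSup_eq]
        refine iSup_le fun hv => ?_
        by_cases hwv : w = v
        · have : w = z' := by
            apply aux_inj F' hw
            rw [hwv]; exact hv
          rw [this]
          exact inf_le_left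
        · refine le_trans ((hl (X ⨯ Y)).2 z w v) ?_
          simp [hwv]
    · -- (C2)
      intro z z'
      refine le_antisymm le_top ?_
      rw [← (hl (⊤_ C)).1 z]
      refine iSup_le fun y => ?_
      rw [hsub.elim y z']
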